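/- Let F : ℝ^m → ℝⁿ be continuously differentiable. Define Γ : ℝ^m → ℝ^m × ℝⁿ by Γ(x) := (x, F(x)) and Q : ℝ^m × ℝⁿ → ℝ^m × ℝⁿ by Q(x, y) := (x, F(x)). Fix x₀ ∈ ℝ^m and let P := DQ(Γ(x₀)) be the Fréchet derivative of Q at the point (x₀, F(x₀)), so that P(h, k) = (h, DF(x₀)h). Then: (a) P is a linear projection, P ∘ P = P, and its range equals the range of DΓ(x₀), i.e., the tangent space T_{(x₀,F(x₀))} graph(F) = { (h, DF(x₀)h) : h ∈ ℝ^m }; and (b) for any linear maps A : ℝ^m → ℝ^m and B : ℝⁿ → ℝⁿ, (0, B(F(x₀)) − DF(x₀)(A x₀)) = −(I − P)(−A x₀, −B(F(x₀))), so the Lie derivative ℒ_{A,B}F(x₀) := B(F(x₀)) − DF(x₀)(A x₀) vanishes if and only if the infinitesimal generator (−A x₀, −B(F(x₀))) is tangent to graph(F) at (x₀, F(x₀)). -/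

import Mathlib

/-- For `F : ℝ^m → ℝⁿ` continuously differentiable, `Γ(x) = (x, F x)`,
`Q(x,y) = (x, F x)`, and `P = DQ(x₀, F x₀)`: (a) `P (h,k) = (h, DF(x₀) h)`, `P` is a
projection whose range is the tangent space to `graph F` at `(x₀, F x₀)`, namely the
range of `DΓ(x₀)`, i.e. `{(h, DF(x₀) h)}`; and (b) for any linear maps `A`, `B`,
`(0, B (F x₀) − DF(x₀)(A x₀)) = −(I − P)(−A x₀, −B (F x₀))`, so the Lie derivative
vanishes iff the infinitesimal generator `(−A x₀, −B (F x₀))` is tangent to the graph. -/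
theorem stmt19 (m n : ℕ) (F : (Fin m → ℝ) → (Fin n → ℝ)) (hF : ContDiff ℝ 1 F)
    (x₀ : Fin m → ℝ) :
    let Γ : (Fin m → ℝ) → (Fin m → ℝ) × (Fin n → ℝ) := fun x => (x, F x)
    let Q : (Fin m → ℝ) × (Fin n → ℝ) → (Fin m → ℝ) × (Fin n → ℝ) := fun p => (p.1, F p.1)
    let P := fderiv ℝ Q (x₀, F x₀)
    (∀ (h : Fin m → ℝ) (k : Fin n → ℝ), P (h, k) = (h, fderiv ℝ F x₀ h)) ∧
    P.comp P = P ∧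
    Set.range (fun w => P w) = Set.range (fun h => fderiv ℝ Γ x₀ h) ∧
    Set.range (fun w => P w)
      = {p : (Fin m → ℝ) × (Fin n → ℝ) | p.2 = fderiv ℝ F x₀ p.1} ∧
    ∀ (A : (Fin m → ℝ) →ₗ[ℝ] (Fin m → ℝ)) (B : (Fin n → ℝ) →ₗ[ℝ] (Fin n → ℝ)),
      (((0 : Fin m → ℝ), B (F x₀) - fderiv ℝ F x₀ (A x₀))
          = -((((-(A x₀), -(B (F x₀))) : (Fin m → ℝ) × (Fin n → ℝ))
              - P (-(A x₀), -(B (F x₀)))))) ∧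
      (B (F x₀) - fderiv ℝ F x₀ (A x₀) = 0 ↔
        (((-(A x₀), -(B (F x₀))) : (Fin m → ℝ) × (Fin n → ℝ))
          ∈ Set.range (fun h => fderiv ℝ Γ x₀ h))) := by
  intro Γ Q P
  have hFd : HasFDerivAt F (fderiv ℝ F x₀) x₀ :=
    (hF.differentiable one_ne_zero x₀).hasFDerivAt
  have hQ : HasFDerivAt Q
      ((ContinuousLinearMap.fst ℝ (Fin m → ℝ) (Fin n → ℝ)).prod
        ((fderiv ℝ F x₀).comp (ContinuousLinearMap.fst ℝ (Fin m → ℝ) (Fin n → ℝ))))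
      (x₀, F x₀) :=
    HasFDerivAt.prodMk (hasFDerivAt_fst) (hFd.comp _ hasFDerivAt_fst)
  have hΓ : HasFDerivAt Γ
      ((ContinuousLinearMap.id ℝ (Fin m → ℝ)).prod (fderiv ℝ F x₀)) x₀ :=
    HasFDerivAt.prodMk (hasFDerivAt_id x₀) hFd
  have hPdef : P = (ContinuousLinearMap.fst ℝ (Fin m → ℝ) (Fin n → ℝ)).prod
      ((fderiv ℝ F x₀).comp (ContinuousLinearMap.fst ℝ (Fin m → ℝ) (Fin n → ℝ))) :=
    hQ.fderiv
  have hΓd : fderiv ℝ Γ x₀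
      = (ContinuousLinearMap.id ℝ (Fin m → ℝ)).prod (fderiv ℝ F x₀) := hΓ.fderiv
  have hP : ∀ (h : Fin m → ℝ) (k : Fin n → ℝ), P (h, k) = (h, fderiv ℝ F x₀ h) := by
    intro h k; rw [hPdef]; rfl
  have hΓrange : Set.range (fun h => fderiv ℝ Γ x₀ h)
      = {p : (Fin m → ℝ) × (Fin n → ℝ) | p.2 = fderiv ℝ F x₀ p.1} := by
    rw [hΓd]
    ext p
    constructor
    · rintro ⟨h, rfl⟩; rfl
    · intro hp
      exact ⟨p.1, by simpa [ContinuousLinearMap.prod_apply, Prod.ext_iff] using hp.symm⟩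
  have hPrange : Set.range (fun w => P w)
      = {p : (Fin m → ℝ) × (Fin n → ℝ) | p.2 = fderiv ℝ F x₀ p.1} := by
    ext p
    constructor
    · rintro ⟨⟨h, k⟩, rfl⟩
      show (P (h, k)).2 = fderiv ℝ F x₀ (P (h, k)).1
      rw [hP h k]
    · intro hp
      refine ⟨(p.1, p.2), ?_⟩
      show P (p.1, p.2) = p
      rw [hP p.1 p.2, ← hp]
  refine ⟨hP, ?_, hPrange.trans hΓrange.symm, hPrange, ?_⟩
  · apply ContinuousLinearMap.ext
    rintro ⟨h, k⟩
    show P (P (h, k)) = P (h, k)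
    rw [hP h k, hP h (fderiv ℝ F x₀ h)]
  · intro A B
    constructor
    · have := hP (-(A x₀)) (-(B (F x₀)))
      rw [this]
      ext i <;> simp [Prod.ext_iff, sub_eq_add_neg]
      ring
    · rw [hΓrange]
      constructor
      · intro h0
        have : B (F x₀) = fderiv ℝ F x₀ (A x₀) := by
          have := sub_eq_zero.mp h0; exact this
        simp [Set.mem_setOf_eq, this, map_neg]
      · intro hmem
        have : -(B (F x₀)) = fderiv ℝ F x₀ (-(A x₀)) := hmem
        rw [map_neg] at this
        rw [sub_eq_zero]
        exact neg_injective this
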